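/- Every x ∈ (N̄^q_{Δ⁻}) has a unique representation x = l·s^{(−1)} + ∑_{k=0}^∞ (λ_k − l) s^{(k)}, where λ_k = τ_k(x), l = lim_{k→∞} τ_k(x), and the partial sums converge in the norm ‖x‖ = sup_n |τ_n(x)|; hence the set {s^{(−1)}} ∪ {s^{(k)} : k ∈ ℕ} is a Schauder basis of (N̄^q_{Δ⁻}). -/

import Mathlib

open Finset Filter Topology

namespace NqDelta

noncomputable section

/-- `Qs q n = ∑_{i=0}^n q i`. -/
def Qs (q : ℕ → ℝ) (n : ℕ) : ℝ := ∑ i ∈ Finset.range (n + 1), q i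

/-- The difference operator `(Δ⁻ x)_k = x_{k-1} - x_k`, with `x_{-1} = 0`. -/
def deltaM (x : ℕ → ℂ) (k : ℕ) : ℂ := (if k = 0 then 0 else x (k - 1)) - x k

/-- `τ_n(x) = (1/Q_n) ∑_{k=0}^n q_k (Δ⁻ x)_k`. -/
def tau (q : ℕ → ℝ) (x : ℕ → ℂ) (n : ℕ) : ℂ :=
  ((Qs q n : ℂ))⁻¹ * ∑ k ∈ Finset.range (n + 1), (q k : ℂ) * deltaM x k

/-- The space `(N̄^q_{Δ⁻})_0 = {x : τ_n(x) → 0}`. -/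
def Nzero (q : ℕ → ℝ) : Set (ℕ → ℂ) := {x | Tendsto (tau q x) atTop (𝓝 0)}

/-- The space `(N̄^q_{Δ⁻}) = {x : (τ_n(x)) converges}`. -/
def Nconv (q : ℕ → ℝ) : Set (ℕ → ℂ) := {x | ∃ l : ℂ, Tendsto (tau q x) atTop (𝓝 l)}

/-- The space `(N̄^q_{Δ⁻})_∞ = {x : sup_n |τ_n(x)| < ∞}`. -/
def Ninf (q : ℕ → ℝ) : Set (ℕ → ℂ) := {x | ∃ M : ℝ, ∀ n, ‖tau q x n‖ ≤ M}

/-- The norm `‖x‖ = sup_n |τ_n(x)|`. -/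
def Nnorm (q : ℕ → ℝ) (x : ℕ → ℂ) : ℝ := ⨆ n, ‖tau q x n‖

/-- The `m`-th section `x^{[m]} = (x_0, …, x_m, 0, 0, …)` of a sequence `x`. -/
def secTrunc (x : ℕ → ℂ) (m : ℕ) : ℕ → ℂ := fun k => if k ≤ m then x k else 0

/-- The sequence `s^{(k)}`: `s^{(k)}_n = Q_k(1/q_{k+1} - 1/q_k)` for `n > k`,
`s^{(k)}_k = -Q_k/q_k`, and `s^{(k)}_n = 0` for `n < k`. -/
def sseq (q : ℕ → ℝ) (k : ℕ) : ℕ → ℂ := fun n =>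
  if n < k then 0
  else if n = k then ((-(Qs q k / q k) : ℝ) : ℂ)
  else ((Qs q k * (1 / q (k + 1) - 1 / q k) : ℝ) : ℂ)

/-- The sequence `s^{(-1)}`, with `s^{(-1)}_n = ∑_{k=0}^{n-1} Q_k(1/q_{k+1} - 1/q_k) - Q_n/q_n`. -/
def sminus (q : ℕ → ℝ) : ℕ → ℂ := fun n =>
  (((∑ k ∈ Finset.range n, Qs q k * (1 / q (k + 1) - 1 / q k)) - Qs q n / q n : ℝ) : ℂ)

/-- The matrix `C = (c_{nk})` associated with a sequence `a`. -/
def Cmat (q : ℕ → ℝ) (a : ℕ → ℂ) (n k : ℕ) : ℂ :=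
  if k < n then ((Qs q k * (1 / q (k + 1) - 1 / q k) : ℝ) : ℂ) * ∑ j ∈ Finset.Icc (k + 1) n, a j
  else if k = n then -(((Qs q n / q n : ℝ) : ℂ) * a n)
  else 0

/-- `exprD q a m = ∑_{k=0}^{m-1} Q_k |(1/q_{k+1} - 1/q_k) ∑_{j=k+1}^m a_j| + |Q_m a_m / q_m|`. -/
def exprD (q : ℕ → ℝ) (a : ℕ → ℂ) (m : ℕ) : ℝ :=
  (∑ k ∈ Finset.range m,
      Qs q k * ‖((1 / q (k + 1) - 1 / q k : ℝ) : ℂ) * ∑ j ∈ Finset.Icc (k + 1) m, a j‖) +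
    ‖((Qs q m / q m : ℝ) : ℂ) * a m‖

/-- The space `c₀` of null complex sequences. -/
def czero : Set (ℕ → ℂ) := {y | Tendsto y atTop (𝓝 0)}

/-- The space `c` of convergent complex sequences. -/
def cconv : Set (ℕ → ℂ) := {y | ∃ l : ℂ, Tendsto y atTop (𝓝 l)}

/-- The space `ℓ_∞` of bounded complex sequences. -/
def linf : Set (ℕ → ℂ) := {y | ∃ M : ℝ, ∀ n, ‖y n‖ ≤ M}

/-- `A ∈ (X, Y)`: for every `x ∈ X` every row series `A_n(x)` converges and `Ax ∈ Y`. -/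
def matMem (A : ℕ → ℕ → ℂ) (X Y : Set (ℕ → ℂ)) : Prop :=
  ∀ x ∈ X, ∃ y ∈ Y, ∀ n,
    Tendsto (fun m => ∑ k ∈ Finset.range (m + 1), A n k * x k) atTop (𝓝 (y n))

/-- Condition (C): `sup_{m,n} exprD q (A n) m < ∞`. -/
def condC (q : ℕ → ℝ) (A : ℕ → ℕ → ℂ) : Prop := ∃ M : ℝ, ∀ m n, exprD q (A n) m ≤ M

/-- `‖A‖^{(s)} = sup_{n > s} sup_m exprD q (A n) m`. -/
def normS (q : ℕ → ℝ) (A : ℕ → ℕ → ℂ) (s : ℕ) : ℝ :=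
  ⨆ n, ⨆ (_ : s < n), ⨆ m, exprD q (A n) m

/-- The supremum distance `sup_n |y_n - z_n|` between two sequences. -/
def supDist (y z : ℕ → ℂ) : ℝ := ⨆ n, ‖y n - z n‖

/-- The Hausdorff measure of noncompactness of `S` as a subset of the metric space `Y`
(with the supremum metric): `inf {ε > 0 : S has a finite ε-net in Y}`. -/
def chiIn (Y S : Set (ℕ → ℂ)) : ℝ :=
  sInf {ε : ℝ | 0 < ε ∧ ∃ T : Finset (ℕ → ℂ), (↑T : Set (ℕ → ℂ)) ⊆ Y ∧
    ∀ y ∈ S, ∃ t ∈ T, supDist y t < ε}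

/-- The image `A F` of the closed unit ball `F = {x ∈ X : ‖x‖ ≤ 1}` under the matrix map `A`. -/
def matImageBall (q : ℕ → ℝ) (A : ℕ → ℕ → ℂ) (X : Set (ℕ → ℂ)) : Set (ℕ → ℂ) :=
  {y | ∃ x, x ∈ X ∧ Nnorm q x ≤ 1 ∧ ∀ n,
    Tendsto (fun m => ∑ k ∈ Finset.range (m + 1), A n k * x k) atTop (𝓝 (y n))}

end

end NqDelta

open NqDelta

section Aux

variable {q : ℕ → ℝ}

lemma Qs_pos (hq : ∀ k, 0 < q k) (n : ℕ) : 0 < Qs q n :=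
  Finset.sum_pos (fun i _ => hq i) (by simp)

lemma QsC_ne (hq : ∀ k, 0 < q k) (n : ℕ) : (Qs q n : ℂ) ≠ 0 :=
  Complex.ofReal_ne_zero.mpr (Qs_pos hq n).ne'

lemma qC_ne (hq : ∀ k, 0 < q k) (n : ℕ) : (q n : ℂ) ≠ 0 :=
  Complex.ofReal_ne_zero.mpr (hq n).ne'

lemma Qs_succ (n : ℕ) : Qs q (n + 1) = Qs q n + q (n + 1) :=
  Finset.sum_range_succ _ _

lemma tau_add (x y : ℕ → ℂ) (n : ℕ) : tau q (x + y) n = tau q x n + tau q y n := by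
  have h : ∀ k, (q k : ℂ) * deltaM (x + y) k
      = (q k : ℂ) * deltaM x k + (q k : ℂ) * deltaM y k := by
    intro k
    simp only [deltaM, Pi.add_apply]
    split_ifs <;> ring
  simp only [tau, Finset.sum_congr rfl fun k _ => h k, Finset.sum_add_distrib]
  ring

lemma tau_sub (x y : ℕ → ℂ) (n : ℕ) : tau q (x - y) n = tau q x n - tau q y n := by
  have h : ∀ k, (q k : ℂ) * deltaM (x - y) k
      = (q k : ℂ) * deltaM x k - (q k : ℂ) * deltaM y k := by
    intro k
    simp only [deltaM, Pi.sub_apply]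
    split_ifs <;> ring
  simp only [tau, Finset.sum_congr rfl fun k _ => h k, Finset.sum_sub_distrib]
  ring

lemma tau_smul (c : ℂ) (x : ℕ → ℂ) (n : ℕ) : tau q (c • x) n = c * tau q x n := by
  have h : ∀ k, (q k : ℂ) * deltaM (c • x) k = c * ((q k : ℂ) * deltaM x k) := by
    intro k
    simp only [deltaM, Pi.smul_apply, smul_eq_mul]
    split_ifs <;> ring
  simp only [tau, Finset.sum_congr rfl fun k _ => h k, ← Finset.mul_sum]
  ring

lemma tau_zero (n : ℕ) : tau q 0 n = 0 := by
  simp [tau, deltaM]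

lemma tau_sum {ι : Type*} (s : Finset ι) (f : ι → ℕ → ℂ) (n : ℕ) :
    tau q (∑ i ∈ s, f i) n = ∑ i ∈ s, tau q (f i) n := by
  classical
  induction s using Finset.induction_on with
  | empty => simpa using tau_zero (q := q) n
  | insert a s h ih => rw [Finset.sum_insert h, tau_add, ih, Finset.sum_insert h]

lemma qmul_deltaM_sseq (hq : ∀ k, 0 < q k) (k j : ℕ) :
    (q j : ℂ) * deltaM (sseq q k) j
      = (if j = k then (Qs q k : ℂ) else 0) + (if j = k + 1 then -(Qs q k : ℂ) else 0) := by
  have hk := qC_ne hq k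
  have hk1 := qC_ne hq (k + 1)
  rcases lt_trichotomy j k with h | h | h
  · rw [if_neg h.ne, if_neg (by omega), add_zero, deltaM]
    have h1 : sseq q k j = 0 := if_pos h
    have h2 : (if j = 0 then (0 : ℂ) else sseq q k (j - 1)) = 0 := by
      split_ifs with h0
      · rfl
      · exact if_pos (by omega)
    rw [h1, h2, sub_zero, mul_zero]
  · subst h
    rw [if_pos rfl, if_neg (by omega), add_zero, deltaM]
    have h1 : sseq q j j = ((-(Qs q j / q j) : ℝ) : ℂ) := by
      rw [sseq]; rw [if_neg (lt_irrefl j), if_pos rfl]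
    have h2 : (if j = 0 then (0 : ℂ) else sseq q j (j - 1)) = 0 := by
      split_ifs with h0
      · rfl
      · exact if_pos (by omega)
    rw [h1, h2, zero_sub]
    push_cast
    field_simp
  · rw [if_neg (by omega)]
    rcases eq_or_lt_of_le (Nat.succ_le_of_lt h) with h1 | h1
    · subst h1
      rw [if_pos rfl, zero_add, deltaM]
      have e1 : sseq q k (k + 1) = ((Qs q k * (1 / q (k + 1) - 1 / q k) : ℝ) : ℂ) := by
        rw [sseq, if_neg (by omega), if_neg (by omega)]
      have e2 : (if k + 1 = 0 then (0 : ℂ) else sseq q k (k + 1 - 1))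
          = ((-(Qs q k / q k) : ℝ) : ℂ) := by
        rw [if_neg (by omega)]
        simp only [Nat.add_sub_cancel]
        rw [sseq, if_neg (lt_irrefl k), if_pos rfl]
      rw [e1, e2]
      push_cast
      field_simp
      ring
    · rw [if_neg (by omega), add_zero, deltaM]
      have e1 : sseq q k j = ((Qs q k * (1 / q (k + 1) - 1 / q k) : ℝ) : ℂ) := by
        rw [sseq, if_neg (by omega), if_neg (by omega)]
      have e2 : (if j = 0 then (0 : ℂ) else sseq q k (j - 1))
          = ((Qs q k * (1 / q (k + 1) - 1 / q k) : ℝ) : ℂ) := by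
        rw [if_neg (by omega), sseq, if_neg (by omega), if_neg (by omega)]
      rw [e1, e2, sub_self, mul_zero]

lemma tau_sseq (hq : ∀ k, 0 < q k) (k n : ℕ) :
    tau q (sseq q k) n = if n = k then 1 else 0 := by
  rw [tau, Finset.sum_congr rfl fun j _ => qmul_deltaM_sseq hq k j,
    Finset.sum_add_distrib, Finset.sum_ite_eq', Finset.sum_ite_eq']
  simp only [Finset.mem_range, Nat.lt_succ_iff]
  rcases lt_trichotomy n k with h | h | h
  · rw [if_neg (by omega), if_neg (by omega), if_neg (by omega), add_zero, mul_zero]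
  · subst h
    rw [if_pos le_rfl, if_neg (by omega), add_zero, if_pos rfl]
    exact inv_mul_cancel₀ (QsC_ne hq n)
  · rw [if_pos (by omega), if_pos (by omega), if_neg (by omega), add_neg_cancel, mul_zero]

lemma qmul_deltaM_sminus (hq : ∀ k, 0 < q k) (j : ℕ) :
    (q j : ℂ) * deltaM (sminus q) j = (q j : ℂ) := by
  rcases Nat.eq_zero_or_pos j with rfl | hj
  · rw [deltaM, if_pos rfl, zero_sub, sminus]
    have h0 : Qs q 0 = q 0 := by simp [Qs]
    simp only [Finset.range_zero, Finset.sum_empty, zero_sub, h0]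
    have := qC_ne hq 0
    push_cast
    field_simp
  · obtain ⟨m, rfl⟩ := Nat.exists_eq_succ_of_ne_zero hj.ne'
    rw [deltaM, if_neg (by omega)]
    simp only [Nat.succ_sub_one]
    rw [sminus, sminus, Finset.sum_range_succ, Qs_succ, ← Complex.ofReal_sub]
    have hreal : ((∑ k ∈ Finset.range m, Qs q k * (1 / q (k + 1) - 1 / q k)) - Qs q m / q m)
        - ((∑ k ∈ Finset.range m, Qs q k * (1 / q (k + 1) - 1 / q k))
            + Qs q m * (1 / q (m + 1) - 1 / q m) - (Qs q m + q (m + 1)) / q (m + 1)) = 1 := by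
      have h1 := (hq m).ne'
      have h2 := (hq (m + 1)).ne'
      field_simp
      ring
    rw [hreal, Complex.ofReal_one, mul_one]

lemma tau_sminus (hq : ∀ k, 0 < q k) (n : ℕ) : tau q (sminus q) n = 1 := by
  rw [tau, Finset.sum_congr rfl fun j _ => qmul_deltaM_sminus hq j]
  have : ∑ k ∈ Finset.range (n + 1), ((q k : ℝ) : ℂ) = ((Qs q n : ℝ) : ℂ) := by
    rw [Qs]; push_cast; rfl
  rw [this, inv_mul_cancel₀ (QsC_ne hq n)]

lemma tau_remainder (hq : ∀ k, 0 < q k) (x : ℕ → ℂ) (c : ℂ) (lam : ℕ → ℂ) (m n : ℕ) :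
    tau q (x - (c • sminus q + ∑ k ∈ Finset.range (m + 1), lam k • sseq q k)) n
      = tau q x n - c - (if n ≤ m then lam n else 0) := by
  rw [tau_sub, tau_add, tau_smul, tau_sum, tau_sminus hq, mul_one]
  have h : ∀ k ∈ Finset.range (m + 1),
      tau q (lam k • sseq q k) n = if n = k then lam k else 0 := by
    intro k _
    rw [tau_smul, tau_sseq hq]
    split_ifs <;> simp
  rw [Finset.sum_congr rfl h, Finset.sum_ite_eq]
  simp only [Finset.mem_range, Nat.lt_succ_iff]
  ring

end Aux

/-- `{s^{(-1)}} ∪ {s^{(k)} : k ∈ ℕ}` is a Schauder basis of `(N̄^q_{Δ⁻})`: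
every `x` in the space has the unique representation
`x = l·s^{(-1)} + ∑_k (λ_k - l) s^{(k)}` with `λ_k = τ_k(x)` and `l = lim_k τ_k(x)`,
the partial sums converging to `x` in the norm `‖x‖ = sup_n |τ_n(x)|`. -/
theorem stmt_4 (q : ℕ → ℝ) (hq : ∀ k, 0 < q k) :
    (sminus q ∈ Nconv q) ∧ (∀ k, sseq q k ∈ Nconv q) ∧
    ∀ x ∈ Nconv q, ∀ l : ℂ, Tendsto (tau q x) atTop (𝓝 l) →
      -- existence of the representation
      (Tendsto (fun m => Nnorm q (x - (l • sminus q +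
          ∑ k ∈ Finset.range (m + 1), (tau q x k - l) • sseq q k))) atTop (𝓝 0)) ∧
      -- uniqueness of the representation
      (∀ (c : ℂ) (lam : ℕ → ℂ),
        Tendsto (fun m => Nnorm q (x - (c • sminus q +
            ∑ k ∈ Finset.range (m + 1), lam k • sseq q k))) atTop (𝓝 0) →
        c = l ∧ lam = fun k => tau q x k - l) := by
  refine ⟨⟨1, ?_⟩, fun k => ⟨0, ?_⟩, ?_⟩
  · have : tau q (sminus q) = fun _ => (1 : ℂ) := funext fun n => tau_sminus hq n
    rw [this]
    exact tendsto_const_nhds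
  · refine Tendsto.congr' ?_ tendsto_const_nhds
    filter_upwards [eventually_gt_atTop k] with n hn
    rw [tau_sseq hq, if_neg hn.ne']
  · intro x _ l hl
    constructor
    · -- existence
      rw [Metric.tendsto_atTop]
      intro ε hε
      obtain ⟨N, hN⟩ := Metric.tendsto_atTop.mp hl (ε / 2) (by linarith)
      refine ⟨N, fun m hm => ?_⟩
      set y := x - (l • sminus q + ∑ k ∈ Finset.range (m + 1), (tau q x k - l) • sseq q k)
        with hy
      have hτ : ∀ n, tau q y n = tau q x n - l - (if n ≤ m then tau q x n - l else 0) :=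
        fun n => tau_remainder hq x l (fun k => tau q x k - l) m n
      have hnn : (0 : ℝ) ≤ Nnorm q y := Real.iSup_nonneg fun n => norm_nonneg _
      rw [Real.dist_eq, sub_zero, abs_of_nonneg hnn]
      have hle : Nnorm q y ≤ ε / 2 := by
        refine ciSup_le fun n => ?_
        rw [hτ n]
        by_cases hn : n ≤ m
        · rw [if_pos hn, sub_self, norm_zero]
          linarith
        · rw [if_neg hn, sub_zero]
          have hnN : N ≤ n := le_trans hm (by omega)
          have := hN n hnN
          rw [dist_eq_norm] at this
          linarith
      linarith
    · -- uniqueness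
      intro c lam h
      have htau : ∀ m n,
          tau q (x - (c • sminus q + ∑ k ∈ Finset.range (m + 1), lam k • sseq q k)) n
            = tau q x n - c - (if n ≤ m then lam n else 0) :=
        fun m n => tau_remainder hq x c lam m n
      obtain ⟨B, hB⟩ : ∃ B : ℝ, ∀ n, ‖tau q x n‖ ≤ B := by
        obtain ⟨B, hB⟩ := hl.norm.bddAbove_range
        exact ⟨B, fun n => hB ⟨n, rfl⟩⟩
      have key : ∀ m n, ‖tau q x n - c - (if n ≤ m then lam n else 0)‖
          ≤ Nnorm q (x - (c • sminus q + ∑ k ∈ Finset.range (m + 1), lam k • sseq q k)) := by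
        intro m n
        rw [← htau m n]
        have hb : BddAbove (Set.range fun n' =>
            ‖tau q (x - (c • sminus q + ∑ k ∈ Finset.range (m + 1), lam k • sseq q k)) n'‖) := by
          refine ⟨(∑ j ∈ Finset.range (m + 1), ‖tau q x j - c - lam j‖) + (B + ‖c‖), ?_⟩
          rintro r ⟨n', rfl⟩
          simp only [htau m n']
          have hsum : (0 : ℝ) ≤ ∑ j ∈ Finset.range (m + 1), ‖tau q x j - c - lam j‖ :=
            Finset.sum_nonneg fun j _ => norm_nonneg _
          have hBc : (0 : ℝ) ≤ B + ‖c‖ :=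
            add_nonneg ((norm_nonneg _).trans (hB 0)) (norm_nonneg _)
          by_cases hn : n' ≤ m
          · rw [if_pos hn]
            have h1 : ‖tau q x n' - c - lam n'‖
                ≤ ∑ j ∈ Finset.range (m + 1), ‖tau q x j - c - lam j‖ :=
              Finset.single_le_sum (f := fun j => ‖tau q x j - c - lam j‖) (fun j _ => norm_nonneg _)
                (Finset.mem_range.mpr (Nat.lt_succ_of_le hn))
            linarith
          · rw [if_neg hn, sub_zero]
            have h1 : ‖tau q x n' - c‖ ≤ B + ‖c‖ :=
              (norm_sub_le _ _).trans (add_le_add (hB n') le_rfl)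
            linarith
        exact le_ciSup hb n
      have hlam : ∀ n, lam n = tau q x n - c := by
        intro n
        have h0 : ‖tau q x n - c - lam n‖ ≤ 0 := by
          refine ge_of_tendsto h ?_
          filter_upwards [eventually_ge_atTop n] with m hm
          have := key m n
          rwa [if_pos hm] at this
        have h1 : tau q x n - c - lam n = 0 :=
          norm_eq_zero.mp (le_antisymm h0 (norm_nonneg _))
        exact (sub_eq_zero.mp h1).symm
      have hcl : c = l := by
        have hle : ∀ m, ‖l - c‖ ≤ Nnorm q
            (x - (c • sminus q + ∑ k ∈ Finset.range (m + 1), lam k • sseq q k)) := by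
          intro m
          refine le_of_tendsto ((hl.sub tendsto_const_nhds).norm) ?_
          filter_upwards [eventually_gt_atTop m] with n hn
          have := key m n
          rwa [if_neg (by omega), sub_zero] at this
        have h0 : ‖l - c‖ ≤ 0 := ge_of_tendsto h (Eventually.of_forall hle)
        have h1 : l - c = 0 := norm_eq_zero.mp (le_antisymm h0 (norm_nonneg _))
        rw [sub_eq_zero] at h1
        exact h1.symm
      exact ⟨hcl, funext fun n => by rw [hlam n, hcl]⟩
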